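/- Suppose [y,x] = 1 for elements x, y of the first Weyl algebra A₁ over a field K of characteristic zero. Let d be one of the two maps a ↦ [y,a]x or a ↦ [x,a]y on A₁, and let v = v_{ρ,η} for a pair of integers (ρ,η) with ρ + η > 0. Then v(d(aⁿ)) = v(a^{n−1}·d(a)) and Δ_{d,v}(aⁿ) = Δ_{d,v}(a) for all elements a ∈ A₁∖ker(d) and all n ≥ 1. -/

import Mathlib

def weylRel (K : Type*) [CommRing K] :
    FreeAlgebra K (Fin 2) → FreeAlgebra K (Fin 2) → Prop :=
  fun a b => a = FreeAlgebra.ι K 1 * FreeAlgebra.ι K 0 ∧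
    b = FreeAlgebra.ι K 0 * FreeAlgebra.ι K 1 + 1

/-- The first Weyl algebra `A₁ = K⟨X, Y | YX - XY = 1⟩` over `K`,
realized as the quotient of the free algebra on two generators `X, Y`
by the relation `Y * X = X * Y + 1`. -/
abbrev WeylAlgebra (K : Type*) [CommRing K] := RingQuot (weylRel K)

/-- The canonical generator `X` of the Weyl algebra. -/
noncomputable def WeylX (K : Type*) [CommRing K] : WeylAlgebra K :=
  RingQuot.mkAlgHom K (weylRel K) (FreeAlgebra.ι K 0)

/-- The canonical generator `Y` of the Weyl algebra. -/
noncomputable def WeylY (K : Type*) [CommRing K] : WeylAlgebra K :=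
  RingQuot.mkAlgHom K (weylRel K) (FreeAlgebra.ι K 1)

/-- The degree function `v_{ρ,η}` on the Weyl algebra: expand an element in the monomial
basis `{YⁱXʲ}` (given as `B`, with `B (i,j) = Yⁱ * Xʲ`) and take
`max {ρi + ηj | a_{ij} ≠ 0}`, with value `⊥ = −∞` on `0`. -/
noncomputable def wdeg {K : Type*} [Field K] (B : Module.Basis (ℕ × ℕ) K (WeylAlgebra K))
    (ρ η : ℤ) (a : WeylAlgebra K) : WithBot ℤ :=
  (B.repr a).support.sup fun p => ((ρ * p.1 + η * p.2 : ℤ) : WithBot ℤ)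

section Dev
variable {K : Type*} [Field K]

local notation "A" => WeylAlgebra K
local notation "Xg" => WeylX K
local notation "Yg" => WeylY K

lemma weyl_rel : (Yg) * (Xg) = (Xg) * (Yg) + 1 := by
  have h := RingQuot.mkAlgHom_rel K (s := weylRel K)
    (x := FreeAlgebra.ι K 1 * FreeAlgebra.ι K 0)
    (y := FreeAlgebra.ι K 0 * FreeAlgebra.ι K 1 + 1) ⟨rfl, rfl⟩
  simpa [WeylX, WeylY, map_mul, map_add, map_one] using h

lemma X_mul_Y : (Xg) * (Yg) = (Yg) * (Xg) - 1 := by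
  rw [weyl_rel, add_sub_cancel_right]

lemma X_mul_Ypow (k : ℕ) :
    (Xg) * (Yg) ^ k = (Yg) ^ k * (Xg) - (k : K) • (Yg) ^ (k - 1) := by
  induction k with
  | zero => simp
  | succ k ih =>
    have step : (Xg) * (Yg) ^ (k+1) = (Yg)^(k+1) * (Xg) - (Yg)^k - (k:K) • ((Yg)^(k-1) * (Yg)) := by
      rw [pow_succ, ← mul_assoc, ih, sub_mul, mul_assoc, X_mul_Y, smul_mul_assoc, mul_sub,
        mul_one, ← pow_succ]
      simp only [← mul_assoc]
      try abel
    rcases Nat.eq_zero_or_pos k with hk | hk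
    · subst hk; rw [step]; push_cast
      simp
    · have h1 : k - 1 + 1 = k := Nat.succ_pred_eq_of_pos hk
      rw [step, ← pow_succ, h1]
      push_cast
      rw [add_smul, one_smul]
      abel

/-- generators of the "lower order terms" span for `X^j * Y^k`. -/
def lowSet (j k : ℕ) : Set A :=
  {m | ∃ t : ℕ, 1 ≤ t ∧ t ≤ j ∧ t ≤ k ∧ m = (Yg) ^ (k - t) * (Xg) ^ (j - t)}

lemma Xpow_mul_Ypow (j k : ℕ) :
    ∃ r ∈ Submodule.span K (lowSet (K := K) j k),
      (Xg) ^ j * (Yg) ^ k = (Yg) ^ k * (Xg) ^ j + r := by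
  induction j with
  | zero => exact ⟨0, Submodule.zero_mem _, by simp⟩
  | succ j ih =>
    obtain ⟨r, hr, he⟩ := ih
    have key : ∀ m ∈ lowSet (K := K) j k,
        (Xg) * m ∈ Submodule.span K (lowSet (K := K) (j+1) k) := by
      rintro m ⟨t, ht1, htj, htk, rfl⟩
      rw [← mul_assoc, X_mul_Ypow, sub_mul, smul_mul_assoc, mul_assoc, ← pow_succ']
      have e1 : j - t + 1 = (j+1) - t := by omega
      apply sub_mem
      · exact Submodule.subset_span ⟨t, ht1, by omega, htk, by rw [e1]⟩
      · rcases eq_or_lt_of_le htk with h | h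
        · rw [h]; simp
        · apply Submodule.smul_mem
          apply Submodule.subset_span
          exact ⟨t+1, by omega, by omega, by omega,
            by rw [show k - t - 1 = k - (t+1) by omega, show j - t = (j+1) - (t+1) by omega]⟩
    have hXr : (Xg) * r ∈ Submodule.span K (lowSet (K := K) (j+1) k) := by
      have h1 : (Xg) * r ∈ Submodule.map (LinearMap.mulLeft K (Xg))
          (Submodule.span K (lowSet (K := K) j k)) := Submodule.mem_map_of_mem hr
      rw [Submodule.map_span] at h1
      refine Submodule.span_le.mpr ?_ h1
      rintro _ ⟨m, hm, rfl⟩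
      exact key m hm
    have hmem : (Xg) * r - (k:K) • ((Yg)^(k-1) * (Xg)^j)
        ∈ Submodule.span K (lowSet (K := K) (j+1) k) := by
      apply sub_mem hXr
      rcases Nat.eq_zero_or_pos k with hk | hk
      · subst hk; simp
      · apply Submodule.smul_mem
        exact Submodule.subset_span ⟨1, le_rfl, by omega, hk, by simp⟩
    refine ⟨_, hmem, ?_⟩
    rw [pow_succ', mul_assoc, he, mul_add, ← mul_assoc, X_mul_Ypow, sub_mul, smul_mul_assoc,
      mul_assoc, ← pow_succ']
    abel

def low2 (i j k l : ℕ) : Set A :=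
  {m | ∃ t : ℕ, 1 ≤ t ∧ t ≤ j ∧ t ≤ k ∧ m = (Yg) ^ (i + k - t) * (Xg) ^ (j + l - t)}

lemma mono_mul (i j k l : ℕ) :
    ∃ r ∈ Submodule.span K (low2 (K := K) i j k l),
      ((Yg) ^ i * (Xg) ^ j) * ((Yg) ^ k * (Xg) ^ l)
        = (Yg) ^ (i + k) * (Xg) ^ (j + l) + r := by
  obtain ⟨r, hr, he⟩ := Xpow_mul_Ypow (K := K) j k
  refine ⟨(Yg) ^ i * r * (Xg) ^ l, ?_, ?_⟩
  · have h1 : (Yg) ^ i * r * (Xg) ^ l ∈ Submodule.map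
        ((LinearMap.mulRight K ((Xg) ^ l)).comp (LinearMap.mulLeft K ((Yg) ^ i)))
        (Submodule.span K (lowSet (K := K) j k)) := Submodule.mem_map_of_mem hr
    rw [Submodule.map_span] at h1
    refine Submodule.span_le.mpr ?_ h1
    rintro _ ⟨m, ⟨t, ht1, htj, htk, rfl⟩, rfl⟩
    apply Submodule.subset_span
    refine ⟨t, ht1, by omega, by omega, ?_⟩
    simp only [LinearMap.coe_comp, Function.comp_apply, LinearMap.mulLeft_apply,
      LinearMap.mulRight_apply]
    rw [← mul_assoc, ← pow_add, mul_assoc, ← pow_add]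
    congr 2 <;> omega
  · calc (Yg) ^ i * (Xg) ^ j * ((Yg) ^ k * (Xg) ^ l)
        = (Yg) ^ i * ((Xg) ^ j * (Yg) ^ k) * (Xg) ^ l := by
          simp only [mul_assoc]
      _ = (Yg) ^ i * ((Yg) ^ k * (Xg) ^ j + r) * (Xg) ^ l := by rw [he]
      _ = (Yg) ^ (i + k) * (Xg) ^ (j + l) + (Yg) ^ i * r * (Xg) ^ l := by
          rw [mul_add, add_mul, pow_add, pow_add]
          simp only [mul_assoc]

section W

variable (B : Module.Basis (ℕ × ℕ) K (WeylAlgebra K)) (ρ η : ℤ)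

lemma le_wdeg {a : A} {p : ℕ × ℕ} (hp : p ∈ (B.repr a).support) :
    ((ρ * p.1 + η * p.2 : ℤ) : WithBot ℤ) ≤ wdeg B ρ η a :=
  Finset.le_sup (f := fun p : ℕ × ℕ => ((ρ * p.1 + η * p.2 : ℤ) : WithBot ℤ)) hp

lemma wdeg_le_iff {a : A} {c : WithBot ℤ} :
    wdeg B ρ η a ≤ c ↔ ∀ p ∈ (B.repr a).support, ((ρ * p.1 + η * p.2 : ℤ) : WithBot ℤ) ≤ c :=
  Finset.sup_le_iff

lemma wdeg_zero : wdeg B ρ η 0 = ⊥ := by simp [wdeg]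

lemma wdeg_eq_bot_iff {a : A} : wdeg B ρ η a = ⊥ ↔ a = 0 := by
  constructor
  · intro h
    by_contra ha
    have h2 : B.repr a ≠ 0 := fun hh => ha (by
      have := congrArg B.repr.symm hh; simpa using this)
    obtain ⟨p, hp⟩ := Finsupp.support_nonempty_iff.mpr h2
    have := le_wdeg B ρ η hp
    rw [h] at this
    exact WithBot.coe_ne_bot (le_bot_iff.mp this)
  · rintro rfl; exact wdeg_zero B ρ η

lemma wdeg_add_le (a b : A) : wdeg B ρ η (a + b) ≤ max (wdeg B ρ η a) (wdeg B ρ η b) := by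
  rw [wdeg_le_iff]
  intro p hp
  rw [map_add] at hp
  rcases Finset.mem_union.mp (Finsupp.support_add hp) with h | h
  · exact le_trans (le_wdeg B ρ η h) (le_max_left _ _)
  · exact le_trans (le_wdeg B ρ η h) (le_max_right _ _)

lemma wdeg_smul_le (c : K) (a : A) : wdeg B ρ η (c • a) ≤ wdeg B ρ η a := by
  rw [wdeg_le_iff]
  intro p hp
  rw [map_smul] at hp
  exact le_wdeg B ρ η (Finsupp.support_smul hp)

lemma wdeg_smul {c : K} (hc : c ≠ 0) (a : A) : wdeg B ρ η (c • a) = wdeg B ρ η a := by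
  unfold wdeg
  rw [map_smul, Finsupp.support_smul_eq hc]

lemma wdeg_neg (a : A) : wdeg B ρ η (-a) = wdeg B ρ η a := by
  unfold wdeg
  rw [map_neg, Finsupp.support_neg]

lemma wdeg_sum_le {ι : Type*} {s : Finset ι} {f : ι → A} {c : WithBot ℤ}
    (h : ∀ i ∈ s, wdeg B ρ η (f i) ≤ c) : wdeg B ρ η (∑ i ∈ s, f i) ≤ c := by
  classical
  induction s using Finset.induction_on with
  | empty => simp [wdeg_zero]
  | insert _ _ hx ih =>
    rw [Finset.sum_insert hx]
    refine le_trans (wdeg_add_le B ρ η _ _) (max_le (h _ (Finset.mem_insert_self _ _)) ?_)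
    exact ih fun i hi => h i (Finset.mem_insert_of_mem hi)

lemma repr_sum_eq (a : A) : ∑ p ∈ (B.repr a).support, B.repr a p • B p = a := by
  conv_rhs => rw [← B.linearCombination_repr a]
  rw [Finsupp.linearCombination_apply, Finsupp.sum]

lemma mul_expand (a b : A) : a * b =
    ∑ p ∈ (B.repr a).support, ∑ q ∈ (B.repr b).support,
      (B.repr a p * B.repr b q) • (B p * B q) := by
  conv_lhs => rw [← repr_sum_eq B a, ← repr_sum_eq B b]
  rw [Finset.sum_mul]
  refine Finset.sum_congr rfl fun p _ => ?_
  rw [Finset.mul_sum]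
  refine Finset.sum_congr rfl fun q _ => ?_
  rw [smul_mul_assoc, mul_smul_comm, smul_smul]

variable (hB : ∀ i j : ℕ, B (i, j) = WeylY K ^ i * WeylX K ^ j)
include hB

lemma wdeg_basis (i j : ℕ) :
    wdeg B ρ η ((Yg) ^ i * (Xg) ^ j) = ((ρ * i + η * j : ℤ) : WithBot ℤ) := by
  rw [← hB i j]
  unfold wdeg
  rw [B.repr_self, Finsupp.support_single_ne_zero _ one_ne_zero, Finset.sup_singleton]

lemma wdeg_low2_le (hρη : 0 < ρ + η) {i j k l : ℕ} {u : A}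
    (hu : u ∈ Submodule.span K (low2 (K := K) i j k l)) :
    wdeg B ρ η u ≤ (((ρ * (i + k) + η * (j + l)) - (ρ + η) : ℤ) : WithBot ℤ) := by
  induction hu using Submodule.span_induction with
  | mem m hm =>
    obtain ⟨t, ht1, htj, htk, rfl⟩ := hm
    rw [wdeg_basis B ρ η hB]
    refine WithBot.coe_le_coe.mpr ?_
    have e1 : ((i + k - t : ℕ) : ℤ) = (i : ℤ) + k - t := by omega
    have e2 : ((j + l - t : ℕ) : ℤ) = (j : ℤ) + l - t := by omega
    rw [e1, e2]
    have ht1' : (1 : ℤ) ≤ t := by exact_mod_cast ht1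
    nlinarith [hρη, ht1']
  | zero => rw [wdeg_zero]; exact bot_le
  | add x y hx hy ihx ihy => exact le_trans (wdeg_add_le B ρ η x y) (max_le ihx ihy)
  | smul c x hx ihx => exact le_trans (wdeg_smul_le B ρ η c x) ihx

lemma wdeg_mono_mul_le (hρη : 0 < ρ + η) (p1 p2 q1 q2 : ℕ) :
    wdeg B ρ η ((WeylY K ^ p1 * WeylX K ^ p2) * (WeylY K ^ q1 * WeylX K ^ q2))
      ≤ (((ρ * p1 + η * p2) + (ρ * q1 + η * q2) : ℤ) : WithBot ℤ) := by
  obtain ⟨r, hr, he⟩ := mono_mul (K := K) p1 p2 q1 q2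
  rw [he]
  refine le_trans (wdeg_add_le B ρ η _ _) (max_le ?_ ?_)
  · rw [wdeg_basis B ρ η hB]
    exact WithBot.coe_le_coe.mpr (by push_cast; linarith)
  · refine le_trans (wdeg_low2_le B ρ η hB hρη hr) (WithBot.coe_le_coe.mpr ?_)
    push_cast
    linarith

lemma wdeg_mul_le (hρη : 0 < ρ + η) (a b : A) :
    wdeg B ρ η (a * b) ≤ wdeg B ρ η a + wdeg B ρ η b := by
  rw [mul_expand B a b]
  apply wdeg_sum_le
  intro p hp
  apply wdeg_sum_le
  intro q hq
  refine le_trans (wdeg_smul_le B ρ η _ _) ?_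
  obtain ⟨p1, p2⟩ := p
  obtain ⟨q1, q2⟩ := q
  rw [hB p1 p2, hB q1 q2]
  refine le_trans (wdeg_mono_mul_le B ρ η hB hρη p1 p2 q1 q2) ?_
  rw [WithBot.coe_add]
  exact add_le_add (le_wdeg B ρ η hp) (le_wdeg B ρ η hq)

lemma wdeg_comm_le (hρη : 0 < ρ + η) {a b : A} {ca cb : ℤ}
    (hca : wdeg B ρ η a ≤ (ca : WithBot ℤ)) (hcb : wdeg B ρ η b ≤ (cb : WithBot ℤ)) :
    wdeg B ρ η (a * b - b * a) ≤ ((ca + cb - (ρ + η) : ℤ) : WithBot ℤ) := by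
  have hex : a * b - b * a = ∑ p ∈ (B.repr a).support, ∑ q ∈ (B.repr b).support,
      (B.repr a p * B.repr b q) • (B p * B q - B q * B p) := by
    rw [mul_expand B a b, mul_expand B b a,
      Finset.sum_comm (s := (B.repr b).support) (t := (B.repr a).support),
      ← Finset.sum_sub_distrib]
    refine Finset.sum_congr rfl fun p _ => ?_
    rw [← Finset.sum_sub_distrib]
    refine Finset.sum_congr rfl fun q _ => ?_
    rw [smul_sub, mul_comm (B.repr b q) (B.repr a p)]
  rw [hex]
  apply wdeg_sum_le
  intro p hp
  apply wdeg_sum_le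
  intro q hq
  refine le_trans (wdeg_smul_le B ρ η _ _) ?_
  have hpa : ((ρ * p.1 + η * p.2 : ℤ) : WithBot ℤ) ≤ (ca : WithBot ℤ) :=
    le_trans (le_wdeg B ρ η hp) hca
  have hqb : ((ρ * q.1 + η * q.2 : ℤ) : WithBot ℤ) ≤ (cb : WithBot ℤ) :=
    le_trans (le_wdeg B ρ η hq) hcb
  rw [WithBot.coe_le_coe] at hpa hqb
  obtain ⟨p1, p2⟩ := p
  obtain ⟨q1, q2⟩ := q
  simp only at hpa hqb
  rw [hB p1 p2, hB q1 q2]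
  obtain ⟨r1, hr1, he1⟩ := mono_mul (K := K) p1 p2 q1 q2
  obtain ⟨r2, hr2, he2⟩ := mono_mul (K := K) q1 q2 p1 p2
  have hT : WeylY K ^ (q1 + p1) * WeylX K ^ (q2 + p2)
      = WeylY K ^ (p1 + q1) * WeylX K ^ (p2 + q2) := by
    rw [Nat.add_comm q1 p1, Nat.add_comm q2 p2]
  rw [he1, he2, hT, add_sub_add_left_eq_sub, sub_eq_add_neg]
  refine le_trans (wdeg_add_le B ρ η _ _) (max_le ?_ ?_)
  · refine le_trans (wdeg_low2_le B ρ η hB hρη hr1) (WithBot.coe_le_coe.mpr ?_)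
    linarith
  · rw [wdeg_neg]
    refine le_trans (wdeg_low2_le B ρ η hB hρη hr2) (WithBot.coe_le_coe.mpr ?_)
    linarith

omit hB in
lemma repr_ne_zero {a : A} (ha : a ≠ 0) : B.repr a ≠ 0 := fun h => ha (by
  have := congrArg B.repr.symm h
  simpa using this)

omit hB in
lemma wdeg_coe_of_ne {a : A} (ha : a ≠ 0) :
    ∃ s : ℤ, wdeg B ρ η a = (s : WithBot ℤ) := by
  obtain ⟨p0, _, hp0e⟩ := Finset.exists_mem_eq_sup (B.repr a).support
    (Finsupp.support_nonempty_iff.mpr (repr_ne_zero B ha))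
    (fun p : ℕ × ℕ => ((ρ * p.1 + η * p.2 : ℤ) : WithBot ℤ))
  exact ⟨_, hp0e⟩

lemma wdeg_mul (hρη : 0 < ρ + η) {a b : A} (ha : a ≠ 0) (hb : b ≠ 0) :
    wdeg B ρ η (a * b) = wdeg B ρ η a + wdeg B ρ η b := by
  classical
  obtain ⟨s, hwa⟩ := wdeg_coe_of_ne B ρ η ha
  obtain ⟨t, hwb⟩ := wdeg_coe_of_ne B ρ η hb
  set Ta := (B.repr a).support.filter (fun p => ρ * p.1 + η * p.2 = s) with hTa
  set Tb := (B.repr b).support.filter (fun p => ρ * p.1 + η * p.2 = t) with hTb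
  have hTane : Ta.Nonempty := by
    obtain ⟨p0, hp0, hp0e⟩ := Finset.exists_mem_eq_sup (B.repr a).support
      (Finsupp.support_nonempty_iff.mpr (repr_ne_zero B ha))
      (fun p : ℕ × ℕ => ((ρ * p.1 + η * p.2 : ℤ) : WithBot ℤ))
    have : ((ρ * p0.1 + η * p0.2 : ℤ) : WithBot ℤ) = (s : WithBot ℤ) := by
      rw [← hp0e]; exact hwa
    exact ⟨p0, Finset.mem_filter.mpr ⟨hp0, WithBot.coe_injective this⟩⟩
  have hTbne : Tb.Nonempty := by
    obtain ⟨q0, hq0, hq0e⟩ := Finset.exists_mem_eq_sup (B.repr b).support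
      (Finsupp.support_nonempty_iff.mpr (repr_ne_zero B hb))
      (fun p : ℕ × ℕ => ((ρ * p.1 + η * p.2 : ℤ) : WithBot ℤ))
    have : ((ρ * q0.1 + η * q0.2 : ℤ) : WithBot ℤ) = (t : WithBot ℤ) := by
      rw [← hq0e]; exact hwb
    exact ⟨q0, Finset.mem_filter.mpr ⟨hq0, WithBot.coe_injective this⟩⟩
  obtain ⟨p1, hp1, hp1m⟩ := Ta.exists_max_image (fun p => p.1) hTane
  obtain ⟨pm, hpm, hpmm⟩ := (Ta.filter (fun p => p.1 = p1.1)).exists_max_image (fun p => p.2)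
    ⟨p1, Finset.mem_filter.mpr ⟨hp1, rfl⟩⟩
  obtain ⟨q1, hq1, hq1m⟩ := Tb.exists_max_image (fun p => p.1) hTbne
  obtain ⟨qm, hqm, hqmm⟩ := (Tb.filter (fun p => p.1 = q1.1)).exists_max_image (fun p => p.2)
    ⟨q1, Finset.mem_filter.mpr ⟨hq1, rfl⟩⟩
  rw [Finset.mem_filter] at hpm hqm
  have hpmTa := hpm.1
  have hqmTb := hqm.1
  rw [Finset.mem_filter] at hpmTa hqmTb
  have hpma : pm ∈ (B.repr a).support := hpmTa.1
  have hqmb : qm ∈ (B.repr b).support := hqmTb.1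
  have hvpm : ρ * pm.1 + η * pm.2 = s := hpmTa.2
  have hvqm : ρ * qm.1 + η * qm.2 = t := hqmTb.2
  set r : ℕ × ℕ := (pm.1 + qm.1, pm.2 + qm.2) with hr
  have hvr : (ρ * r.1 + η * r.2 : ℤ) = s + t := by
    simp only [hr]
    push_cast
    linarith [hvpm, hvqm]
  -- uniqueness of the top pair
  have huniq : ∀ p ∈ (B.repr a).support, ∀ q ∈ (B.repr b).support,
      ((p.1 + q.1, p.2 + q.2) : ℕ × ℕ) = r → p = pm ∧ q = qm := by
    intro p hp q hq heq
    have h1 : p.1 + q.1 = pm.1 + qm.1 := congrArg Prod.fst heq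
    have h2 : p.2 + q.2 = pm.2 + qm.2 := congrArg Prod.snd heq
    have c1 : (p.1 : ℤ) + q.1 = (pm.1 : ℤ) + qm.1 := by exact_mod_cast h1
    have c2 : (p.2 : ℤ) + q.2 = (pm.2 : ℤ) + qm.2 := by exact_mod_cast h2
    have hvp : (ρ * p.1 + η * p.2 : ℤ) ≤ s := by
      have := le_wdeg B ρ η hp; rw [hwa] at this; exact_mod_cast this
    have hvq : (ρ * q.1 + η * q.2 : ℤ) ≤ t := by
      have := le_wdeg B ρ η hq; rw [hwb] at this; exact_mod_cast this
    have hsum : (ρ * p.1 + η * p.2) + (ρ * q.1 + η * q.2) = s + t := by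
      linear_combination ρ * c1 + η * c2 + hvpm + hvqm
    have hvps : (ρ * p.1 + η * p.2 : ℤ) = s := by linarith
    have hvqt : (ρ * q.1 + η * q.2 : ℤ) = t := by linarith
    have hpTa : p ∈ Ta := Finset.mem_filter.mpr ⟨hp, hvps⟩
    have hqTb : q ∈ Tb := Finset.mem_filter.mpr ⟨hq, hvqt⟩
    have hple : p.1 ≤ pm.1 := hpm.2 ▸ hp1m p hpTa
    have hqle : q.1 ≤ qm.1 := hqm.2 ▸ hq1m q hqTb
    have hp1e : p.1 = pm.1 := by omega
    have hq1e : q.1 = qm.1 := by omega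
    have hple2 : p.2 ≤ pm.2 := hpmm p (Finset.mem_filter.mpr ⟨hpTa, by rw [hp1e, hpm.2]⟩)
    have hqle2 : q.2 ≤ qm.2 := hqmm q (Finset.mem_filter.mpr ⟨hqTb, by rw [hq1e, hqm.2]⟩)
    have hp2e : p.2 = pm.2 := by omega
    have hq2e : q.2 = qm.2 := by omega
    exact ⟨Prod.ext hp1e hp2e, Prod.ext hq1e hq2e⟩
  have hterm : ∀ p ∈ (B.repr a).support, ∀ q ∈ (B.repr b).support,
      B.repr (B p * B q) r = if ((p.1 + q.1, p.2 + q.2) : ℕ × ℕ) = r then 1 else 0 := by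
    intro p hp q hq
    obtain ⟨r1, hr1, he1⟩ := mono_mul (K := K) p.1 p.2 q.1 q.2
    have hBp := hB p.1 p.2
    have hBq := hB q.1 q.2
    rw [Prod.mk.eta] at hBp hBq
    have hBpq : B p * B q = B (p.1 + q.1, p.2 + q.2) + r1 := by
      rw [hBp, hBq, he1, hB (p.1 + q.1) (p.2 + q.2)]
    rw [hBpq, map_add, Finsupp.add_apply, B.repr_self, Finsupp.single_apply]
    have hvp : (ρ * p.1 + η * p.2 : ℤ) ≤ s := by
      have := le_wdeg B ρ η hp; rw [hwa] at this; exact_mod_cast this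
    have hvq : (ρ * q.1 + η * q.2 : ℤ) ≤ t := by
      have := le_wdeg B ρ η hq; rw [hwb] at this; exact_mod_cast this
    have hlow : (B.repr r1) r = 0 := by
      by_contra h0
      have h1 := le_wdeg B ρ η (Finsupp.mem_support_iff.mpr h0)
      have h3 := le_trans h1 (wdeg_low2_le B ρ η hB hρη hr1)
      rw [hvr, WithBot.coe_le_coe] at h3
      push_cast at h3
      linarith
    rw [hlow, add_zero]
  have hcoef : B.repr (a * b) r = B.repr a pm * B.repr b qm := by
    conv_lhs => rw [mul_expand B a b]
    rw [map_sum, Finsupp.finset_sum_apply]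
    have hinner : ∀ p ∈ (B.repr a).support,
        (B.repr (∑ q ∈ (B.repr b).support, (B.repr a p * B.repr b q) • (B p * B q))) r
          = ∑ q ∈ (B.repr b).support, (B.repr a p * B.repr b q) * (B.repr (B p * B q) r) := by
      intro p _
      rw [map_sum, Finsupp.finset_sum_apply]
      refine Finset.sum_congr rfl fun q _ => ?_
      rw [map_smul, Finsupp.smul_apply, smul_eq_mul]
    rw [Finset.sum_congr rfl hinner]
    rw [Finset.sum_eq_single_of_mem pm hpma ?_]
    · rw [Finset.sum_eq_single_of_mem qm hqmb ?_]
      · rw [hterm pm hpma qm hqmb, if_pos rfl, mul_one]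
      · intro q hq hqne
        rw [hterm pm hpma q hq]
        split_ifs with hc
        · exact absurd (huniq pm hpma q hq hc).2 hqne
        · exact mul_zero _
    · intro p hp hpne
      refine Finset.sum_eq_zero fun q hq => ?_
      rw [hterm p hp q hq]
      split_ifs with hc
      · exact absurd (huniq p hp q hq hc).1 hpne
      · exact mul_zero _
  have hne0 : B.repr (a * b) r ≠ 0 := by
    rw [hcoef]
    exact mul_ne_zero (Finsupp.mem_support_iff.mp hpma) (Finsupp.mem_support_iff.mp hqmb)
  have hlb : ((s + t : ℤ) : WithBot ℤ) ≤ wdeg B ρ η (a * b) := by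
    have := le_wdeg B ρ η (Finsupp.mem_support_iff.mpr hne0)
    rwa [hvr] at this
  have hub := wdeg_mul_le B ρ η hB hρη a b
  rw [hwa, hwb] at hub ⊢
  rw [← WithBot.coe_add] at hub
  rw [← WithBot.coe_add]
  exact le_antisymm hub hlb

omit hB in
lemma comm_pow (w a : A) (m : ℕ) :
    w * a ^ (m + 1) - a ^ (m + 1) * w
      = ∑ i ∈ Finset.range (m + 1), a ^ i * (w * a - a * w) * a ^ (m - i) := by
  induction m with
  | zero => simp
  | succ m ih =>
    have hstep : w * a ^ (m + 2) - a ^ (m + 2) * w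
        = (w * a ^ (m + 1) - a ^ (m + 1) * w) * a + a ^ (m + 1) * (w * a - a * w) := by
      simp only [pow_succ, mul_sub, sub_mul, mul_assoc]
      abel
    rw [hstep, ih, Finset.sum_mul, Finset.sum_range_succ (n := m + 1)]
    congr 1
    · refine Finset.sum_congr rfl fun i hi => ?_
      have hi' : i ≤ m := by
        have := Finset.mem_range.mp hi; omega
      rw [mul_assoc, ← pow_succ]
      congr 2
      omega
    · simp

lemma pow_facts (hρη : 0 < ρ + η) {a : A} (ha : a ≠ 0) {sa : ℤ}
    (hsa : wdeg B ρ η a = (sa : WithBot ℤ)) (n : ℕ) :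
    a ^ n ≠ 0 ∧ wdeg B ρ η (a ^ n) = ((n * sa : ℤ) : WithBot ℤ) := by
  haveI : Nontrivial A := ⟨⟨B (0, 0), 0, B.ne_zero _⟩⟩
  induction n with
  | zero =>
    refine ⟨by rw [pow_zero]; exact one_ne_zero, ?_⟩
    have h := wdeg_basis B ρ η hB 0 0
    rw [pow_zero]
    simpa using h
  | succ n ih =>
    have hw : wdeg B ρ η (a ^ n * a) = ((n * sa + sa : ℤ) : WithBot ℤ) := by
      rw [wdeg_mul B ρ η hB hρη ih.1 ha, ih.2, hsa, ← WithBot.coe_add]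
    have hne : a ^ n * a ≠ 0 := by
      intro h0
      rw [h0, wdeg_zero] at hw
      exact WithBot.bot_ne_coe hw
    rw [pow_succ]
    refine ⟨hne, ?_⟩
    rw [hw]
    congr 1
    push_cast
    ring

lemma main_aux [CharZero K] (hρη : 0 < ρ + η) (w z a : A)
    (ha : (w * a - a * w) * z ≠ 0) (n : ℕ) (hn : 1 ≤ n) :
    wdeg B ρ η ((w * a ^ n - a ^ n * w) * z)
      = wdeg B ρ η (a ^ (n - 1) * ((w * a - a * w) * z))
    ∧ wdeg B ρ η ((w * a ^ n - a ^ n * w) * z) + wdeg B ρ η a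
      = wdeg B ρ η ((w * a - a * w) * z) + wdeg B ρ η (a ^ n) := by
  obtain ⟨m, rfl⟩ : ∃ m, n = m + 1 := ⟨n - 1, by omega⟩
  have hm1 : m + 1 - 1 = m := by omega
  rw [hm1]
  set c : A := w * a - a * w with hc_def
  have hc : c ≠ 0 := left_ne_zero_of_mul ha
  have hz : z ≠ 0 := right_ne_zero_of_mul ha
  have haz : a ≠ 0 := by
    rintro rfl
    apply ha
    simp [hc_def]
  obtain ⟨sa, hsa⟩ := wdeg_coe_of_ne B ρ η haz
  obtain ⟨sc, hsc⟩ := wdeg_coe_of_ne B ρ η hc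
  obtain ⟨sz, hsz⟩ := wdeg_coe_of_ne B ρ η hz
  have hpow := pow_facts B ρ η hB hρη haz hsa
  have hcz : wdeg B ρ η (c * z) = ((sc + sz : ℤ) : WithBot ℤ) := by
    rw [wdeg_mul B ρ η hB hρη hc hz, hsc, hsz, ← WithBot.coe_add]
  have hD : wdeg B ρ η (a ^ m * (c * z)) = ((m * sa + (sc + sz) : ℤ) : WithBot ℤ) := by
    rw [wdeg_mul B ρ η hB hρη (hpow m).1 ha, (hpow m).2, hcz, ← WithBot.coe_add]
  -- the split of the commutator sum
  have hsplit : ∀ i ∈ Finset.range (m + 1),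
      a ^ i * c * a ^ (m - i) = a ^ m * c + a ^ i * (c * a ^ (m - i) - a ^ (m - i) * c) := by
    intro i hi
    have hie : i + (m - i) = m := by
      have := Finset.mem_range.mp hi; omega
    have hpow_split : a ^ m = a ^ i * a ^ (m - i) := by rw [← pow_add, hie]
    rw [hpow_split]
    simp only [mul_sub, ← mul_assoc]
    abel
  have hsum : (w * a ^ (m + 1) - a ^ (m + 1) * w) * z
      = ((m + 1 : K)) • (a ^ m * (c * z))
        + (∑ i ∈ Finset.range (m + 1), a ^ i * (c * a ^ (m - i) - a ^ (m - i) * c)) * z := by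
    rw [comm_pow w a m, Finset.sum_congr rfl hsplit, Finset.sum_add_distrib,
      Finset.sum_const, Finset.card_range, add_mul, smul_mul_assoc, mul_assoc]
    congr 1
    rw [← Nat.cast_smul_eq_nsmul K (m + 1) ((a ^ m * (c * z)))]
    push_cast
    rfl
  -- bound the error term
  have hEz : wdeg B ρ η
      ((∑ i ∈ Finset.range (m + 1), a ^ i * (c * a ^ (m - i) - a ^ (m - i) * c)) * z)
      ≤ ((m * sa + (sc + sz) - (ρ + η) : ℤ) : WithBot ℤ) := by
    rw [Finset.sum_mul]
    apply wdeg_sum_le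
    intro i hi
    have hie : ((m - i : ℕ) : ℤ) = (m : ℤ) - i := by
      have := Finset.mem_range.mp hi; omega
    have hcomm : wdeg B ρ η (c * a ^ (m - i) - a ^ (m - i) * c)
        ≤ ((sc + (m - i : ℕ) * sa - (ρ + η) : ℤ) : WithBot ℤ) :=
      wdeg_comm_le B ρ η hB hρη (le_of_eq hsc) (le_of_eq (hpow (m - i)).2)
    calc wdeg B ρ η (a ^ i * (c * a ^ (m - i) - a ^ (m - i) * c) * z)
        ≤ wdeg B ρ η (a ^ i * (c * a ^ (m - i) - a ^ (m - i) * c)) + wdeg B ρ η z :=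
          wdeg_mul_le B ρ η hB hρη _ _
      _ ≤ (wdeg B ρ η (a ^ i) + wdeg B ρ η (c * a ^ (m - i) - a ^ (m - i) * c))
            + wdeg B ρ η z := add_le_add (wdeg_mul_le B ρ η hB hρη _ _) le_rfl
      _ ≤ (((i * sa : ℤ) : WithBot ℤ) + ((sc + (m - i : ℕ) * sa - (ρ + η) : ℤ) : WithBot ℤ))
            + ((sz : ℤ) : WithBot ℤ) := by
          rw [(hpow i).2, hsz]
          exact add_le_add (add_le_add le_rfl hcomm) le_rfl
      _ = ((m * sa + (sc + sz) - (ρ + η) : ℤ) : WithBot ℤ) := by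
          rw [← WithBot.coe_add, ← WithBot.coe_add, WithBot.coe_inj, hie]
          ring
  have hKne : ((m + 1 : K)) ≠ 0 := Nat.cast_add_one_ne_zero m
  have hmain : wdeg B ρ η (((m + 1 : K)) • (a ^ m * (c * z)))
      = ((m * sa + (sc + sz) : ℤ) : WithBot ℤ) := by
    rw [wdeg_smul B ρ η hKne, hD]
  have hlt : ((m * sa + (sc + sz) - (ρ + η) : ℤ) : WithBot ℤ)
      < ((m * sa + (sc + sz) : ℤ) : WithBot ℤ) := by
    rw [WithBot.coe_lt_coe]; linarith
  have hkey : wdeg B ρ η ((w * a ^ (m + 1) - a ^ (m + 1) * w) * z)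
      = ((m * sa + (sc + sz) : ℤ) : WithBot ℤ) := by
    rw [hsum]
    set main := ((m + 1 : K)) • (a ^ m * (c * z)) with hmdef
    set Ez := (∑ i ∈ Finset.range (m + 1), a ^ i * (c * a ^ (m - i) - a ^ (m - i) * c)) * z
      with hEzdef
    refine le_antisymm ?_ ?_
    · exact le_trans (wdeg_add_le B ρ η _ _)
        (max_le (le_of_eq hmain) (le_trans hEz (le_of_lt hlt)))
    · have hdec : main = (main + Ez) + (-Ez) := by abel
      have h5 : wdeg B ρ η main ≤ max (wdeg B ρ η (main + Ez)) (wdeg B ρ η (-Ez)) := by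
        conv_lhs => rw [hdec]
        exact wdeg_add_le B ρ η _ _
      rw [wdeg_neg, hmain] at h5
      rcases le_max_iff.mp h5 with h6 | h6
      · exact h6
      · exact absurd (le_trans h6 hEz) (not_le.mpr hlt)
  constructor
  · rw [hkey, hD]
  · rw [hkey, hcz, (hpow (m + 1)).2, hsa, ← WithBot.coe_add, ← WithBot.coe_add,
      WithBot.coe_inj]
    push_cast
    ring

end W

end Dev

/-- **Lemma 3.1.** Suppose `[y,x] = 1` for elements `x, y` of the Weyl algebra `A₁` over
a field `K` of characteristic zero. Let `d` be one of the maps `a ↦ [y,a]x`,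
`a ↦ [x,a]y`, and let `v = v_{ρ,η}` for integers `(ρ,η)` with `ρ + η > 0` (the basis `B`
realizes the monomial basis `{YⁱXʲ}` of `A₁` in which `v_{ρ,η}` is computed). Then
`v(d(aⁿ)) = v(a^{n−1}·d(a))` and `Δ_{d,v}(aⁿ) = Δ_{d,v}(a)` (the latter stated in the
equivalent additive form `v(d(aⁿ)) + v(a) = v(d(a)) + v(aⁿ)`) for all `a ∈ A₁ ∖ ker d`
and all `n ≥ 1`. -/
theorem drop_eq_on_powers (K : Type*) [Field K] [CharZero K]
    (B : Module.Basis (ℕ × ℕ) K (WeylAlgebra K))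
    (hB : ∀ i j : ℕ, B (i, j) = WeylY K ^ i * WeylX K ^ j)
    (x y : WeylAlgebra K) (hxy : y * x - x * y = 1)
    (ρ η : ℤ) (hρη : 0 < ρ + η)
    (d : WeylAlgebra K → WeylAlgebra K)
    (hd : d = (fun a => (y * a - a * y) * x) ∨ d = (fun a => (x * a - a * x) * y))
    (a : WeylAlgebra K) (ha : d a ≠ 0) (n : ℕ) (hn : 1 ≤ n) :
    wdeg B ρ η (d (a ^ n)) = wdeg B ρ η (a ^ (n - 1) * d a)
    ∧ wdeg B ρ η (d (a ^ n)) + wdeg B ρ η a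
        = wdeg B ρ η (d a) + wdeg B ρ η (a ^ n) := by
  rcases hd with rfl | rfl
  · exact main_aux (B := B) (ρ := ρ) (η := η) hB hρη y x a ha n hn
  · exact main_aux (B := B) (ρ := ρ) (η := η) hB hρη x y a ha n hn
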